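/- Let I_a ⊆ Q_n with a ≥ 1, and let α be the smallest index with m_α(I_a) ≠ 0. Then m_α(I_a) = a − 2^{n−1−α}, and this is the smallest nonzero value among all entries m_j(I_a) and a − m_j(I_a) (j = 0,...,n−1) of the m-table of I_a. -/

import Mathlib

/-- The hypercube graph on `{0,1}^n`: two strings adjacent iff they differ in one coordinate. -/
def hypercube (n : ℕ) : SimpleGraph (Fin n → Bool) where
  Adj x y := (Finset.univ.filter (fun i => x i ≠ y i)).card = 1
  symm := by constructor; intro x y h; simpa [ne_comm] using h
  loopless := by constructor; intro x h; simp at h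

/-- The integer represented by a string, position 0 most significant. -/
def bval {n : ℕ} (x : Fin n → Bool) : ℕ :=
  ∑ i : Fin n, if x i then 2 ^ (n - 1 - i.val) else 0

/-- The initial segment of length `a` in the binary order on `{0,1}^n`. -/
def initSeg (n a : ℕ) : Finset (Fin n → Bool) :=
  Finset.univ.filter (fun x => bval x < a)

/-- `m_j(S)`: number of elements of `S` with a `1` in coordinate `j`. -/
def mCount {n : ℕ} (S : Finset (Fin n → Bool)) (j : Fin n) : ℕ :=
  (S.filter (fun x => x j = true)).card

/-- The hyperface `F_{j,k}` of strings whose `j`-th coordinate equals `k`. -/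
def face (n : ℕ) (j : Fin n) (k : Bool) : Finset (Fin n → Bool) :=
  Finset.univ.filter (fun x => x j = k)

/-! ### Auxiliary lemmas -/

lemma sum_testBit (n : ℕ) : ∀ m : ℕ, m < 2^n →
    ∑ i ∈ Finset.range n, (if m.testBit i then 2^i else 0) = m := by
  induction n with
  | zero => intro m hm; interval_cases m; simp
  | succ n ih =>
    intro m hm
    rw [Finset.sum_range_succ']
    have h2 : m / 2 < 2^n := by
      rw [Nat.div_lt_iff_lt_mul (by norm_num)]; rw [pow_succ] at hm; omega
    have hs := ih (m/2) h2
    have ht : ∀ i, m.testBit (i+1) = (m/2).testBit i := fun i => Nat.testBit_succ ..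
    simp only [ht, pow_succ, pow_zero]
    have : ∑ i ∈ Finset.range n, (if (m/2).testBit i then 2^i*2 else 0)
        = 2 * ∑ i ∈ Finset.range n, (if (m/2).testBit i then 2^i else 0) := by
      rw [Finset.mul_sum]; exact Finset.sum_congr rfl fun i _ => by split <;> ring
    rw [this, hs]
    have h0 : (if m.testBit 0 then 1 else 0) = m % 2 := by
      rcases Nat.mod_two_eq_zero_or_one m with h | h <;>
        simp [Nat.testBit_zero, Nat.mod_two_eq_one_iff_testBit_zero.symm, h]
    omega

lemma sum_pows (n : ℕ) : ∑ i ∈ Finset.range n, 2^i = 2^n - 1 := by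
  induction n with
  | zero => simp
  | succ n ih =>
    rw [Finset.sum_range_succ, ih]
    have := Nat.one_le_two_pow (n := n); rw [pow_succ]; omega

lemma bval_testBit {n : ℕ} (m : ℕ) (hm : m < 2^n) :
    bval (fun i : Fin n => m.testBit (n - 1 - i.val)) = m := by
  calc bval (fun i : Fin n => m.testBit (n - 1 - i.val))
      = ∑ i ∈ Finset.range n, (if m.testBit (n-1-i) then 2^(n-1-i) else 0) :=
        by unfold bval; exact Fin.sum_univ_eq_sum_range (fun q => if m.testBit (n-1-q) then 2^(n-1-q) else 0) n
    _ = ∑ i ∈ Finset.range n, (if m.testBit i then 2^i else 0) := by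
        rw [← Finset.sum_range_reflect]
        exact Finset.sum_congr rfl fun i hi => by
          rw [Finset.mem_range] at hi
          rw [show n - 1 - (n - 1 - i) = i by omega]
    _ = m := sum_testBit n m hm

lemma bval_lt {n : ℕ} (x : Fin n → Bool) : bval x < 2^n := by
  have h1 : bval x ≤ ∑ i : Fin n, 2^(n-1-i.val) := by
    apply Finset.sum_le_sum; intro i _; split <;> simp
  have h2 : ∑ i : Fin n, 2^(n-1-(i : Fin n).val) = ∑ i ∈ Finset.range n, 2^(n-1-i) :=
    Fin.sum_univ_eq_sum_range (fun q => 2^(n-1-q)) n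
  have h3 : ∑ i ∈ Finset.range n, 2^(n-1-i) = ∑ i ∈ Finset.range n, 2^i := by
    rw [← Finset.sum_range_reflect]
    exact Finset.sum_congr rfl fun i hi => by
      rw [Finset.mem_range] at hi; congr 1; omega
  have h4 := sum_pows n
  have := Nat.one_le_two_pow (n := n)
  omega

lemma image_bval (n : ℕ) :
    (Finset.univ : Finset (Fin n → Bool)).image bval = Finset.range (2^n) := by
  apply Finset.Subset.antisymm
  · intro m hm
    simp only [Finset.mem_image] at hm
    obtain ⟨x, -, rfl⟩ := hm
    exact Finset.mem_range.2 (bval_lt x)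
  · intro m hm
    rw [Finset.mem_range] at hm
    exact Finset.mem_image.2 ⟨_, Finset.mem_univ _, bval_testBit m hm⟩

lemma bval_inj (n : ℕ) : Function.Injective (bval (n := n)) := by
  have h : ((Finset.univ : Finset (Fin n → Bool)).image bval).card
      = (Finset.univ : Finset (Fin n → Bool)).card := by
    rw [image_bval, Finset.card_range, Finset.card_univ]; simp
  intro x y hxy
  exact Finset.injOn_of_card_image_eq h (Finset.mem_univ x) (Finset.mem_univ y) hxy

lemma testBit_bval {n : ℕ} (x : Fin n → Bool) (j : Fin n) :
    (bval x).testBit (n - 1 - j.val) = x j := by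
  have h := bval_testBit (bval x) (bval_lt x)
  have := bval_inj n h
  conv_rhs => rw [← this]

lemma card_initSeg {n a : ℕ} (ha : a ≤ 2^n) : (initSeg n a).card = a := by
  have h1 : (initSeg n a).card = ((initSeg n a).image bval).card :=
    (Finset.card_image_of_injective _ (bval_inj n)).symm
  have h2 : (initSeg n a).image bval = (Finset.range (2^n)).filter (· < a) := by
    ext m
    simp only [Finset.mem_image, initSeg, Finset.mem_filter, Finset.mem_univ, true_and,
      Finset.mem_range]
    constructor
    · rintro ⟨x, hx, rfl⟩; exact ⟨bval_lt x, hx⟩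
    · rintro ⟨hm, hma⟩
      exact ⟨_, by rw [bval_testBit m hm]; exact hma, bval_testBit m hm⟩
  rw [h1, h2]
  have : (Finset.range (2^n)).filter (· < a) = Finset.range a := by
    ext m; simp only [Finset.mem_filter, Finset.mem_range]; omega
  rw [this, Finset.card_range]

lemma bval_erase {n : ℕ} (x : Fin n → Bool) (j : Fin n) :
    bval x = (if x j then 2^(n-1-j.val) else 0)
      + ∑ i ∈ Finset.univ.erase j, (if x i then 2^(n-1-i.val) else 0) :=
  (Finset.add_sum_erase _ _ (Finset.mem_univ j)).symm

lemma erase_update {n : ℕ} (x : Fin n → Bool) (j : Fin n) (c : Bool) :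
    ∑ i ∈ Finset.univ.erase j, (if Function.update x j c i then 2^(n-1-i.val) else 0)
      = ∑ i ∈ Finset.univ.erase j, (if x i then 2^(n-1-i.val) else 0) :=
  Finset.sum_congr rfl fun i hi => by
    rw [Function.update_of_ne (Finset.ne_of_mem_erase hi)]

lemma bval_update_false {n : ℕ} (x : Fin n → Bool) (j : Fin n) (h : x j = true) :
    bval (Function.update x j false) + 2^(n-1-j.val) = bval x := by
  rw [bval_erase (Function.update x j false) j, erase_update, bval_erase x j,
    Function.update_self, h]
  simp [Nat.add_comm]

lemma bval_update_true {n : ℕ} (x : Fin n → Bool) (j : Fin n) (h : x j = false) :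
    bval (Function.update x j true) = bval x + 2^(n-1-j.val) := by
  rw [bval_erase (Function.update x j true) j, erase_update, bval_erase x j,
    Function.update_self, h]
  simp [Nat.add_comm]

lemma bval_single {n : ℕ} (j : Fin n) :
    bval (Function.update (fun _ => false) j true) = 2^(n-1-j.val) := by
  rw [bval_update_true _ j rfl]
  have : bval (fun _ : Fin n => false) = 0 := by unfold bval; simp
  rw [this, Nat.zero_add]

lemma bval_ge_of_true {n : ℕ} (x : Fin n → Bool) (j : Fin n) (h : x j = true) :
    2^(n-1-j.val) ≤ bval x := by
  rw [bval_erase x j, h]; simp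

lemma add_pow_lt {m p k : ℕ} (hp : p ≤ k) (hm : m < 2^(k+1)) (hb : m.testBit p = false) :
    m + 2^p < 2^(k+1) := by
  have hb' : m / 2^p % 2 = 0 := by
    rw [Nat.testBit_eq_decide_div_mod_eq] at hb
    simpa using hb
  set P := 2^p with hP
  have hP0 : 0 < P := Nat.pow_pos (by norm_num)
  have hmod : m % (P*2) / P = m / P % 2 := Nat.mod_mul_right_div_self m P 2
  have hr : m % (P*2) < P := by
    have h1 : m % (P*2) / P = 0 := by rw [hmod, hb']
    have := Nat.mod_lt m (show 0 < P*2 by omega)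
    rcases Nat.lt_or_ge (m % (P*2)) P with h | h
    · exact h
    · exfalso; have := Nat.div_le_div_right (c := P) h
      rw [Nat.div_self hP0, h1] at this; omega
  have hkp : 2^(k+1) = 2^(k-p) * (P*2) := by
    rw [hP, ← pow_succ, ← pow_add]; congr 1; omega
  have hq : m / (P*2) < 2^(k-p) := by
    apply Nat.div_lt_of_lt_mul; rw [mul_comm, ← hkp]; exact hm
  have h2 : (P*2) * (m / (P*2)) + P*2 ≤ 2^(k+1) := by
    have h3 : (m / (P*2) + 1) * (P*2) ≤ 2^(k-p) * (P*2) :=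
      Nat.mul_le_mul_right _ hq
    rw [add_one_mul, mul_comm (m / (P*2))] at h3; omega
  have h1 := Nat.div_add_mod m (P*2)
  omega

/-! ### Counting lemmas -/

lemma count_split {n a : ℕ} (ha : a ≤ 2^n) (j : Fin n) :
    mCount (initSeg n a) j + ((initSeg n a).filter (fun x => x j = false)).card = a := by
  have h := Finset.card_filter_add_card_filter_not (s := initSeg n a)
    (p := fun x => x j = true)
  have heq : (initSeg n a).filter (fun x => ¬ x j = true)
      = (initSeg n a).filter (fun x => x j = false) := by
    apply Finset.filter_congr; intro x _; simp
  rw [heq] at h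
  rw [mCount, h, card_initSeg ha]

lemma update_injOn {n : ℕ} (j : Fin n) (c : Bool) (s : Finset (Fin n → Bool))
    (hs : ∀ x ∈ s, x j = !c) :
    Set.InjOn (fun x : Fin n → Bool => Function.update x j c) ↑s := by
  intro x hx y hy h
  funext i
  by_cases hi : i = j
  · subst hi; rw [hs x (Finset.mem_coe.1 hx), hs y (Finset.mem_coe.1 hy)]
  · have := congrFun h i
    simpa [Function.update_of_ne hi] using this

lemma count_true_le_false {n a : ℕ} (j : Fin n) :
    mCount (initSeg n a) j ≤ ((initSeg n a).filter (fun x => x j = false)).card := by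
  rw [mCount]
  apply Finset.card_le_card_of_injOn (fun x => Function.update x j false)
  · intro x hx
    simp only [initSeg, Finset.mem_coe, Finset.mem_filter, Finset.mem_univ, true_and] at hx ⊢
    obtain ⟨hxa, hxj⟩ := hx
    refine ⟨?_, Function.update_self j false x⟩
    have h := bval_update_false x j hxj
    exact lt_of_le_of_lt (Nat.le.intro h) hxa
  · exact update_injOn j false _ (fun x hx => by
      simpa using (Finset.mem_filter.1 hx).2)

lemma count_true_le_half {n a k : ℕ} (ha : a ≤ 2^(k+1)) (han : a ≤ 2^n) (j : Fin n) :
    mCount (initSeg n a) j ≤ 2^k := by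
  have h1 := count_true_le_false (n := n) (a := a) j
  have h2 := count_split han j
  have h3 : 2^(k+1) = 2^k + 2^k := by rw [pow_succ]; ring
  generalize hF : ((initSeg n a).filter (fun x => x j = false)).card = F at h1 h2
  clear hF
  omega

lemma count_false_le {n a k : ℕ} (j : Fin n) (hp : n-1-j.val ≤ k) (ha : a ≤ 2^(k+1)) :
    ((initSeg n a).filter (fun x => x j = false)).card
      ≤ mCount (initSeg n (2^(k+1))) j := by
  rw [mCount]
  apply Finset.card_le_card_of_injOn (fun x => Function.update x j true)
  · intro x hx
    simp only [initSeg, Finset.mem_coe, Finset.mem_filter, Finset.mem_univ, true_and] at hx ⊢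
    obtain ⟨hxa, hxj⟩ := hx
    refine ⟨?_, Function.update_self j true x⟩
    rw [bval_update_true x j hxj]
    exact add_pow_lt hp (lt_of_lt_of_le hxa ha) (by rw [testBit_bval]; exact hxj)
  · exact update_injOn j true _ (fun x hx => by
      simpa using (Finset.mem_filter.1 hx).2)

lemma count_ge {n a k : ℕ} (han : a ≤ 2^n) (hT : 2^(k+1) ≤ 2^n) (ha : a ≤ 2^(k+1))
    (j : Fin n) (hp : n-1-j.val ≤ k) :
    a ≤ 2^k + mCount (initSeg n a) j := by
  have h1 := count_split han j
  have h2 := le_trans (count_false_le j hp ha) (count_true_le_half le_rfl hT j)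
  generalize hF : ((initSeg n a).filter (fun x => x j = false)).card = F at h1 h2
  clear hF
  omega

lemma mCount_eq_zero {n a : ℕ} (j : Fin n) (ha : a ≤ 2^(n-1-j.val)) :
    mCount (initSeg n a) j = 0 := by
  rw [mCount, Finset.card_eq_zero, Finset.filter_eq_empty_iff]
  intro x hx h
  rw [initSeg, Finset.mem_filter] at hx
  exact absurd (lt_of_lt_of_le hx.2 ha) (not_lt.2 (bval_ge_of_true x j h))

lemma mCount_ne_zero {n a : ℕ} (j : Fin n) (ha : 2^(n-1-j.val) < a) :
    mCount (initSeg n a) j ≠ 0 := by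
  rw [mCount]
  apply Finset.card_ne_zero_of_mem (a := Function.update (fun _ => false) j true)
  refine Finset.mem_filter.2 ⟨?_, Function.update_self j true (fun _ => false)⟩
  rw [initSeg, Finset.mem_filter]
  exact ⟨Finset.mem_univ _, by rw [bval_single]; exact ha⟩

theorem stmt_7 (n a : ℕ) (ha : 1 ≤ a) (ha2 : a ≤ 2 ^ n) (α : Fin n)
    (hα : mCount (initSeg n a) α ≠ 0)
    (hmin : ∀ β : Fin n, β < α → mCount (initSeg n a) β = 0) :
    mCount (initSeg n a) α = a - 2 ^ (n - 1 - α.val) ∧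
    (∀ j : Fin n,
      (mCount (initSeg n a) j ≠ 0 → mCount (initSeg n a) α ≤ mCount (initSeg n a) j) ∧
      (a - mCount (initSeg n a) j ≠ 0 →
        mCount (initSeg n a) α ≤ a - mCount (initSeg n a) j)) := by
  have hαn : α.val < n := α.isLt
  set k := n - 1 - α.val with hk
  have h2k_lt_a : 2^k < a := by
    by_contra h
    exact hα (mCount_eq_zero α (not_lt.1 h))
  have ha_le : a ≤ 2^(k+1) := by
    rcases Nat.eq_zero_or_pos α.val with h0 | h0
    · have hkn : k + 1 = n := by omega
      rw [hkn]; exact ha2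
    · by_contra h
      have hβ : (⟨α.val - 1, by omega⟩ : Fin n) < α := by
        rw [Fin.lt_def]; simp; omega
      have hz := hmin _ hβ
      have hne := mCount_ne_zero (a := a) (⟨α.val - 1, by omega⟩ : Fin n) (by
        show 2^(n - 1 - (α.val - 1)) < a
        rw [show n - 1 - (α.val - 1) = k + 1 from by omega]; omega)
      exact hne hz
  have hT : 2^(k+1) ≤ 2^n := Nat.pow_le_pow_right (by norm_num) (by omega)
  have hmT_le : ∀ j : Fin n, mCount (initSeg n a) j ≤ 2^k := fun j =>
    count_true_le_half ha_le ha2 j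
  have hup : ∀ j : Fin n, n-1-j.val ≤ k → a ≤ 2^k + mCount (initSeg n a) j :=
    fun j hp => count_ge ha2 hT ha_le j hp
  have hmF_ge : 2^k ≤ ((initSeg n a).filter (fun x => x α = false)).card := by
    have hsub : initSeg n (2^k) ⊆ (initSeg n a).filter (fun x => x α = false) := by
      intro x hx
      rw [initSeg, Finset.mem_filter] at hx
      refine Finset.mem_filter.2 ⟨Finset.mem_filter.2 ⟨Finset.mem_univ _, by
        show bval x < a; omega⟩, ?_⟩
      by_contra hxt
      rw [Bool.not_eq_false] at hxt
      have := bval_ge_of_true x α hxt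
      rw [← hk] at this
      omega
    calc 2^k = (initSeg n (2^k)).card :=
          (card_initSeg (Nat.pow_le_pow_right (by norm_num) (by omega))).symm
      _ ≤ _ := Finset.card_le_card hsub
  have hdown : mCount (initSeg n a) α + 2^k ≤ a := by
    have h1 := count_split ha2 α
    generalize hF : ((initSeg n a).filter (fun x => x α = false)).card = F at h1 hmF_ge
    clear hF
    omega
  clear hmF_ge
  have heq : mCount (initSeg n a) α = a - 2^k := by
    have h1 := hup α (by omega)
    omega
  refine ⟨heq, fun j => ⟨?_, ?_⟩⟩
  · intro hj
    have hp : n - 1 - j.val ≤ k := by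
      by_contra hp
      exact hj (mCount_eq_zero j (le_trans ha_le
        (Nat.pow_le_pow_right (by norm_num) (by omega))))
    have h1 := hup j hp
    omega
  · intro _
    have := hmT_le j
    omega
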